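/- Let A be a C*-algebra, a = a* a self-adjoint element of A, and b ∈ A. Let f be a nonnegative smooth integrable function on ℝ with ∫ f(t) dt = 1. Define b₁ = ∫ f(t) e^{ita} b e^{-ita} dt. Then ‖b - b₁‖ ≤ (∫ f(t)|t| dt) · ‖ab - ba‖ and ‖a b₁ - b₁ a‖ ≤ ‖ab - ba‖. -/

import Mathlib

open MeasureTheory Complex

/-- Smoothing by averaging over the unitary group generated by a self-adjoint
element: norm estimates for `b₁ = ∫ f(t) e^{ita} b e^{-ita} dt`. -/
theorem stmt0 {A : Type*} [CStarAlgebra A]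
    (a b : A) (ha : IsSelfAdjoint a)
    (f : ℝ → ℝ) (hf_nonneg : ∀ t, 0 ≤ f t) (hf_cont : Continuous f)
    (hf_int : Integrable f) (hf_one : (∫ t, f t) = 1)
    (hf_moment : Integrable (fun t => f t * |t|))
    (b₁ : A)
    (hb₁ : b₁ = ∫ t, ((f t : ℂ)) •
      (NormedSpace.exp (((t : ℂ) * Complex.I) • a) * b *
        NormedSpace.exp ((-((t : ℂ) * Complex.I)) • a))) :
    ‖b - b₁‖ ≤ (∫ t, f t * |t|) * ‖a * b - b * a‖ ∧
      ‖a * b₁ - b₁ * a‖ ≤ ‖a * b - b * a‖ := by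
  set x : A := Complex.I • a with hx
  set d : A := a * b - b * a with hd
  set u : ℝ → A := fun s => NormedSpace.exp (s • x) with hu
  -- norm bound on u
  have humem : ∀ s : ℝ, u s ∈ unitary A := by
    intro s
    rw [hu]
    simp only
    rw [hx, smul_comm]
    let +nondep : NormedAlgebra ℚ A := .restrictScalars ℚ ℂ A
    exact NormedSpace.exp_mem_unitary_of_mem_skewAdjoint
      ((IsSelfAdjoint.smul (star_trivial s) ha).smul_mem_skewAdjoint conj_I)
  have hunorm : ∀ s : ℝ, ‖u s‖ ≤ 1 := by
    intro s
    rcases subsingleton_or_nontrivial A with h | h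
    · simp [Subsingleton.elim (u s) 0]
    · exact le_of_eq (CStarRing.norm_of_mem_unitary (humem s))
  have hconj : ∀ (s t : ℝ) (y : A), ‖u s * y * u t‖ ≤ ‖y‖ := by
    intro s t y
    calc ‖u s * y * u t‖ ≤ ‖u s * y‖ * ‖u t‖ := norm_mul_le _ _
      _ ≤ ‖u s‖ * ‖y‖ * ‖u t‖ := by gcongr; exacts [norm_mul_le _ _]
      _ ≤ 1 * ‖y‖ * 1 := by gcongr; exacts [hunorm s, hunorm t]
      _ = ‖y‖ := by ring
  -- continuity of u
  have hucont : Continuous u := by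
    exact continuous_iff_continuousAt.2 fun s => (hasDerivAt_exp_smul_const (𝕂 := ℝ) x s).continuousAt
  set g : ℝ → A := fun t => u t * b * u (-t) with hg
  have hgcont : Continuous g := ((hucont.mul continuous_const).mul (hucont.comp continuous_neg))
  have hgnorm : ∀ t, ‖g t‖ ≤ ‖b‖ := fun t => hconj t (-t) b
  -- rewrite b₁
  have hcoe : ∀ t : ℝ, ((t : ℂ) * Complex.I) • a = t • x := by
    intro t; rw [hx, mul_smul, Complex.coe_smul]
  have hb₁' : b₁ = ∫ t, f t • g t := by
    rw [hb₁]
    congr 1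
    funext t
    rw [show (-((t : ℂ) * Complex.I)) • a = (-t : ℝ) • x by
      rw [← hcoe]; push_cast; ring_nf]
    rw [hcoe t, Complex.coe_smul]
  -- derivative of u
  have hud : ∀ s : ℝ, HasDerivAt u (u s * x) s := by
    intro s
    have := hasDerivAt_exp_smul_const (𝕂 := ℝ) x s
    exact this
  have huneg : ∀ s : ℝ, HasDerivAt (fun t : ℝ => u (-t)) (-(u (-s) * x)) s := by
    intro s
    have h1 := (hud (-s)).scomp s (hasDerivAt_neg s)
    simpa [Function.comp_def] using h1
  have hcommx : ∀ s : ℝ, Commute x (u s) := by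
    intro s
    exact ((Commute.refl x).smul_right (s : ℝ)).exp_right
  -- derivative of g
  have hgd : ∀ t : ℝ, HasDerivAt g (u t * (Complex.I • d) * u (-t)) t := by
    intro t
    have h1 : HasDerivAt (fun t : ℝ => u t * b) (u t * x * b) t := (hud t).mul_const b
    have h2 := h1.mul (huneg t)
    convert h2 using 1
    · rfl
    have hIe : Complex.I • d = x * b - b * x := by
      rw [hd, hx, smul_sub, smul_mul_assoc, mul_smul_comm]
    rw [hIe, ← (hcommx (-t)).eq]
    noncomm_ring
  have hgd_norm : ∀ t : ℝ, ‖u t * (Complex.I • d) * u (-t)‖ ≤ ‖d‖ := by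
    intro t
    refine le_trans (hconj t (-t) _) ?_
    rw [norm_smul, Complex.norm_I, one_mul]
  -- mean value
  have hkey : ∀ t : ℝ, ‖g t - b‖ ≤ ‖d‖ * |t| := by
    intro t
    have h0 : g 0 = b := by
      simp [hg, hu, NormedSpace.exp_zero]
    have := convex_univ.norm_image_sub_le_of_norm_hasDerivWithin_le
      (f := g) (f' := fun t => u t * (Complex.I • d) * u (-t)) (C := ‖d‖)
      (fun s _ => (hgd s).hasDerivWithinAt) (fun s _ => hgd_norm s)
      (Set.mem_univ (0 : ℝ)) (Set.mem_univ t)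
    simpa [h0, Real.norm_eq_abs] using this
  -- integrability
  have hgint : Integrable (fun t => f t • g t) := by
    refine Integrable.mono (hf_int.mul_const ‖b‖) ((hf_cont.smul hgcont).aestronglyMeasurable) ?_
    filter_upwards with t
    rw [norm_smul, Real.norm_eq_abs, Real.norm_eq_abs, _root_.abs_of_nonneg (hf_nonneg t),
      _root_.abs_of_nonneg (mul_nonneg (hf_nonneg t) (norm_nonneg b))]
    exact mul_le_mul_of_nonneg_left (hgnorm t) (hf_nonneg t)
  have hfbint : Integrable (fun t => f t • b) := hf_int.smul_const b
  have hbsub : b - b₁ = ∫ t, f t • (b - g t) := by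
    have hb' : b = ∫ t, f t • b := by rw [integral_smul_const, hf_one, one_smul]
    rw [hb₁']
    conv_lhs => rw [hb']
    rw [← integral_sub hfbint hgint]
    congr 1; funext t; rw [smul_sub]
  have hdnn : (0:ℝ) ≤ ‖d‖ := norm_nonneg d
  constructor
  · rw [hbsub]
    have := norm_integral_le_of_norm_le (μ := (volume : Measure ℝ))
      (f := fun t => f t • (b - g t)) (g := fun t => f t * |t| * ‖d‖)
      (hf_moment.mul_const ‖d‖) ?_
    · refine this.trans ?_
      rw [integral_mul_const]
    · filter_upwards with t
      rw [norm_smul, Real.norm_eq_abs, _root_.abs_of_nonneg (hf_nonneg t)]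
      calc f t * ‖b - g t‖ = f t * ‖g t - b‖ := by rw [norm_sub_rev]
        _ ≤ f t * (‖d‖ * |t|) := mul_le_mul_of_nonneg_left (hkey t) (hf_nonneg t)
        _ = f t * |t| * ‖d‖ := by ring
  · -- second part
    set L : A →L[ℝ] A := ContinuousLinearMap.mul ℝ A a - (ContinuousLinearMap.mul ℝ A).flip a
      with hL
    have hLapp : ∀ y : A, L y = a * y - y * a := by intro y; simp [hL]
    have hcomm_a : ∀ s : ℝ, a * u s = u s * a := by
      intro s
      have : Commute a x := by rw [hx]; exact (Commute.refl a).smul_right Complex.I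
      exact ((this.smul_right (s : ℝ)).exp_right).eq
    have hLg : ∀ t : ℝ, L (g t) = u t * d * u (-t) := by
      intro t
      rw [hLapp, hg]
      simp only
      calc a * (u t * b * u (-t)) - u t * b * u (-t) * a
          = u t * (a * b) * u (-t) - u t * (b * a) * u (-t) := by
            rw [show a * (u t * b * u (-t)) = (a * u t) * b * u (-t) by noncomm_ring,
              hcomm_a t,
              show u t * b * u (-t) * a = u t * b * (u (-t) * a) by noncomm_ring,
              ← hcomm_a (-t)]
            noncomm_ring
        _ = u t * d * u (-t) := by rw [hd]; noncomm_ring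
    have heq : a * b₁ - b₁ * a = ∫ t, f t • (u t * d * u (-t)) := by
      rw [← hLapp, hb₁', ← L.integral_comp_comm hgint]
      congr 1; funext t
      rw [L.map_smul, hLg]
    rw [heq]
    have := norm_integral_le_of_norm_le (μ := (volume : Measure ℝ))
      (f := fun t => f t • (u t * d * u (-t))) (g := fun t => f t * ‖d‖)
      (hf_int.mul_const ‖d‖) ?_
    · refine this.trans ?_
      rw [integral_mul_const, hf_one, one_mul]
    · filter_upwards with t
      rw [norm_smul, Real.norm_eq_abs, _root_.abs_of_nonneg (hf_nonneg t)]
      exact mul_le_mul_of_nonneg_left (hconj t (-t) d) (hf_nonneg t)
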